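/- Let Ω ⊆ ℝ^d be open and bounded with C⁰ boundary, and let ε > 0. Then there exists a Lipschitz map f : cl(Ω) → Ω (i.e. f(cl(Ω)) ⊆ Ω) with Lipschitz constant at most 1 + ε and with sup_{x ∈ cl(Ω)} |f(x) − x| < ε, such that moreover the affine homotopy from the identity to f stays in cl(Ω): for every t ∈ [0,1] and every x ∈ cl(Ω), the point (1−t)x + t·f(x) belongs to cl(Ω). -/

import Mathlib

open Metric Set
open scoped RealInnerProductSpace

/-- `v` is a good direction for `Ω` at `x₀` at scale `δ`: `v` is a unit vector and there is a
continuous function `g` on the hyperplane `Π(x₀,v) = {x | ⟪x - x₀, v⟫ = 0}` such that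
`Ω ∩ B(x₀,δ)` is the open region above the graph of `g` and `∂Ω ∩ B(x₀,δ)` is the graph of `g`,
in the direction `v`.  Here `x - ⟪x - x₀, v⟫ • v` is the orthogonal projection of `x` onto
`Π(x₀,v)`. -/
def IsGoodDirection {d : ℕ} (Ω : Set (EuclideanSpace ℝ (Fin d)))
    (x₀ : EuclideanSpace ℝ (Fin d)) (δ : ℝ) (v : EuclideanSpace ℝ (Fin d)) : Prop :=
  ‖v‖ = 1 ∧ ∃ g : EuclideanSpace ℝ (Fin d) → ℝ,
    ContinuousOn g {x | ⟪x - x₀, v⟫ = 0} ∧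
    Ω ∩ ball x₀ δ = {x ∈ ball x₀ δ | g (x - ⟪x - x₀, v⟫ • v) < ⟪x - x₀, v⟫} ∧
    frontier Ω ∩ ball x₀ δ = {x ∈ ball x₀ δ | g (x - ⟪x - x₀, v⟫ • v) = ⟪x - x₀, v⟫}

/-- An open set `Ω ⊆ ℝ^d` has `C⁰` boundary: at every boundary point there is a good direction
at some positive scale. -/
def HasC0Boundary {d : ℕ} (Ω : Set (EuclideanSpace ℝ (Fin d))) : Prop :=
  ∀ x₀ ∈ frontier Ω, ∃ δ > (0 : ℝ), ∃ v : EuclideanSpace ℝ (Fin d),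
    IsGoodDirection Ω x₀ δ v

lemma min_lip (c a b : ℝ) : |min c a - min c b| ≤ |a - b| := by
  have h1 : ∀ u v : ℝ, min c u - min c v ≤ |u - v| := by
    intro u v
    rcases le_total c v with h | h
    · rw [min_eq_left h]
      have := min_le_left c u
      linarith [abs_nonneg (u - v)]
    · rw [min_eq_right h]
      have := min_le_right c u
      linarith [le_abs_self (u - v)]
  rw [abs_sub_le_iff]
  exact ⟨h1 a b, by have := h1 b a; rwa [abs_sub_comm] at this⟩

lemma max_lip (c a b : ℝ) : |max c a - max c b| ≤ |a - b| := by
  have h1 : ∀ u v : ℝ, max c u - max c v ≤ |u - v| := by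
    intro u v
    rcases le_total u c with h | h
    · rw [max_eq_left h]
      have := le_max_left c v
      linarith [abs_nonneg (u - v)]
    · rw [max_eq_right h]
      have := le_max_left c v
      have h3 := le_max_right c v
      linarith [le_abs_self (u - v)]
  rw [abs_sub_le_iff]
  exact ⟨h1 a b, by have := h1 b a; rwa [abs_sub_comm] at this⟩

lemma list_norm_sum_le {α : Type*} {F : Type*} [SeminormedAddCommGroup F] :
    ∀ (L : List α) (g : α → F) (C : ℝ), (∀ p ∈ L, ‖g p‖ ≤ C) → ‖(L.map g).sum‖ ≤ L.length * C := by
  intro L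
  induction L with
  | nil => intro g C _; simp
  | cons p L' ih =>
      intro g C h
      simp only [List.map_cons, List.sum_cons, List.length_cons]
      have h1 := norm_add_le (g p) (L'.map g).sum
      have h2 := ih g C (fun q hq => h q (List.mem_cons_of_mem _ hq))
      have h3 := h p (List.mem_cons_self (a := p) (l := L'))
      push_cast
      nlinarith

lemma list_sum_sub {α : Type*} {F : Type*} [AddCommGroup F] :
    ∀ (L : List α) (g1 g2 : α → F),
      (L.map g1).sum - (L.map g2).sum = (L.map fun p => g1 p - g2 p).sum := by
  intro L
  induction L with
  | nil => intro g1 g2; simp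
  | cons p L' ih =>
      intro g1 g2
      simp only [List.map_cons, List.sum_cons]
      rw [← ih g1 g2]
      abel

lemma foldr_min_pos : ∀ (l : List ℝ), (∀ a ∈ l, 0 < a) → 0 < l.foldr min 1
  | [], _ => one_pos
  | a :: l, h => by
      simp only [List.foldr_cons]
      exact lt_min (h a (List.mem_cons_self (a := a) (l := l)))
        (foldr_min_pos l fun b hb => h b (List.mem_cons_of_mem _ hb))

lemma foldr_min_le : ∀ (l : List ℝ), ∀ a ∈ l, l.foldr min 1 ≤ a
  | [] => by intro a ha; simp at ha
  | a :: l => by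
      intro b hb
      simp only [List.foldr_cons]
      rcases List.mem_cons.mp hb with rfl | h
      · exact min_le_left _ _
      · exact (min_le_right _ _).trans (foldr_min_le l b h)

lemma pen {d : ℕ} {Ω : Set (EuclideanSpace ℝ (Fin d))} {x₀ v : EuclideanSpace ℝ (Fin d)} {δ : ℝ}
    (hgd : IsGoodDirection Ω x₀ δ v) {x : EuclideanSpace ℝ (Fin d)}
    (hx : x ∈ closure Ω) (h1 : dist x x₀ < δ) {s : ℝ} (hs : 0 < s)
    (h2 : dist (x + s • v) x₀ < δ) : x + s • v ∈ Ω := by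
  obtain ⟨hv, g, hg, hΩeq, hfreq⟩ := hgd
  have hvv : ⟪v, v⟫ = 1 := by
    rw [real_inner_self_eq_norm_sq, hv]; norm_num
  have hxball : x ∈ ball x₀ δ := mem_ball.mpr h1
  have hle : g (x - ⟪x - x₀, v⟫ • v) ≤ ⟪x - x₀, v⟫ := by
    by_cases hxo : x ∈ Ω
    · have hmem : x ∈ Ω ∩ ball x₀ δ := ⟨hxo, hxball⟩
      rw [hΩeq] at hmem
      exact le_of_lt hmem.2
    · have hxf : x ∈ frontier Ω := ⟨hx, fun h => hxo (interior_subset h)⟩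
      have hmem : x ∈ frontier Ω ∩ ball x₀ δ := ⟨hxf, hxball⟩
      rw [hfreq] at hmem
      exact le_of_eq hmem.2
  have hinner : ⟪x + s • v - x₀, v⟫ = ⟪x - x₀, v⟫ + s := by
    have h3 : x + s • v - x₀ = (x - x₀) + s • v := by abel
    rw [h3, inner_add_left, real_inner_smul_left, hvv, mul_one]
  have hproj : (x + s • v) - ⟪x + s • v - x₀, v⟫ • v = x - ⟪x - x₀, v⟫ • v := by
    rw [hinner, add_smul]; abel
  have hmem : x + s • v ∈ Ω ∩ ball x₀ δ := by
    rw [hΩeq]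
    refine ⟨mem_ball.mpr h2, ?_⟩
    rw [hproj, hinner]
    linarith
  exact hmem.1

lemma poly {d : ℕ} {Ω : Set (EuclideanSpace ℝ (Fin d))}
    (δf : EuclideanSpace ℝ (Fin d) → ℝ)
    (vf : EuclideanSpace ℝ (Fin d) → EuclideanSpace ℝ (Fin d))
    (c : EuclideanSpace ℝ (Fin d) → ℝ) {s : ℝ} (hs : 0 < s)
    (L : List (EuclideanSpace ℝ (Fin d))) :
    ∀ y : EuclideanSpace ℝ (Fin d), y ∈ closure Ω →
      (∀ p ∈ L, 0 ≤ c p) →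
      (∀ p ∈ L, 0 < c p → c p ≤ 1 ∧ IsGoodDirection Ω p (δf p) (vf p) ∧
          dist y p + s * (L.length : ℝ) < δf p) →
      (y + s • (L.map fun p => c p • vf p).sum ∈ closure Ω ∧
        ((y ∈ Ω ∨ ∃ p ∈ L, 0 < c p) → y + s • (L.map fun p => c p • vf p).sum ∈ Ω)) := by
  induction L with
  | nil =>
      intro y hy _ _
      simp only [List.map_nil, List.sum_nil, smul_zero, add_zero]
      refine ⟨hy, ?_⟩
      rintro (h | ⟨p, hp, _⟩)
      · exact h
      · simp at hp
  | cons p L' iH =>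
      intro y hy h0 hbud
      have hlen : (((p :: L').length : ℕ) : ℝ) = (L'.length : ℝ) + 1 := by
        push_cast [List.length_cons]; ring
      have hslen : 0 ≤ s * (L'.length : ℝ) := by positivity
      rcases (h0 p (List.mem_cons_self (a := p) (l := L'))).lt_or_eq with hcp | hcp
      · -- 0 < c p
        obtain ⟨hc1, hgd, hbd⟩ := hbud p (List.mem_cons_self (a := p) (l := L')) hcp
        rw [hlen] at hbd
        have hv1 : ‖vf p‖ = 1 := hgd.1
        have hdyy' : dist (y + (s * c p) • vf p) y ≤ s := by
          rw [dist_eq_norm]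
          have he : y + (s * c p) • vf p - y = (s * c p) • vf p := by abel
          rw [he, norm_smul, hv1, mul_one, Real.norm_eq_abs,
            abs_of_nonneg (by positivity : (0:ℝ) ≤ s * c p)]
          nlinarith
        have hdyp : dist y p < δf p := by nlinarith
        have hy'p : dist (y + (s * c p) • vf p) p < δf p := by
          have htr := dist_triangle (y + (s * c p) • vf p) y p
          nlinarith
        have hy'Ω : y + (s * c p) • vf p ∈ Ω :=
          pen hgd hy hdyp (by positivity) hy'p
        have iH' := iH (y + (s * c p) • vf p) (subset_closure hy'Ω)
          (fun q hq => h0 q (List.mem_cons_of_mem _ hq))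
          (fun q hq hcq => by
            obtain ⟨ha, hb, hc⟩ := hbud q (List.mem_cons_of_mem _ hq) hcq
            rw [hlen] at hc
            refine ⟨ha, hb, ?_⟩
            have htr := dist_triangle (y + (s * c p) • vf p) y q
            nlinarith)
        have hsum : y + s • ((p :: L').map fun q => c q • vf q).sum
            = (y + (s * c p) • vf p) + s • (L'.map fun q => c q • vf q).sum := by
          simp only [List.map_cons, List.sum_cons, smul_add, smul_smul]
          abel
        rw [hsum]
        exact ⟨iH'.1, fun _ => iH'.2 (Or.inl hy'Ω)⟩
      · -- 0 = c p
        have hz : c p • vf p = 0 := by rw [← hcp, zero_smul]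
        have hsum : ((p :: L').map fun q => c q • vf q).sum
            = (L'.map fun q => c q • vf q).sum := by
          simp [List.map_cons, List.sum_cons, hz]
        have iH' := iH y hy (fun q hq => h0 q (List.mem_cons_of_mem _ hq))
          (fun q hq hcq => by
            obtain ⟨ha, hb, hc⟩ := hbud q (List.mem_cons_of_mem _ hq) hcq
            rw [hlen] at hc
            exact ⟨ha, hb, by nlinarith⟩)
        rw [hsum]
        refine ⟨iH'.1, ?_⟩
        rintro (h | ⟨q, hq, hcq⟩)
        · exact iH'.2 (Or.inl h)
        · rcases List.mem_cons.mp hq with rfl | hq'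
          · exact absurd hcp.symm hcq.ne'
          · exact iH'.2 (Or.inr ⟨q, hq', hcq⟩)

set_option maxHeartbeats 1000000 in
/-- **Contraction into the domain** (Proposition 2.11 / `pp:ContractInto`): for a bounded open
set `Ω` with `C⁰` boundary and `ε > 0` there is a Lipschitz map `f : cl(Ω) → Ω` with Lipschitz
constant at most `1 + ε`, uniformly `ε`-close to the identity, whose affine homotopy with the
identity stays inside `cl(Ω)`. -/
theorem contractInto {d : ℕ} (Ω : Set (EuclideanSpace ℝ (Fin d)))
    (hΩ : IsOpen Ω) (hbdd : Bornology.IsBounded Ω) (hC0 : HasC0Boundary Ω)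
    (ε : ℝ) (hε : 0 < ε) :
    ∃ f : EuclideanSpace ℝ (Fin d) → EuclideanSpace ℝ (Fin d),
      (∀ x ∈ closure Ω, f x ∈ Ω) ∧
      (∀ x ∈ closure Ω, ∀ y ∈ closure Ω, ‖f x - f y‖ ≤ (1 + ε) * ‖x - y‖) ∧
      (∀ x ∈ closure Ω, ‖f x - x‖ < ε) ∧
      (∀ t ∈ Set.Icc (0 : ℝ) 1, ∀ x ∈ closure Ω,
        (1 - t) • x + t • f x ∈ closure Ω) := by
  by_cases hfr : frontier Ω = ∅
  · -- trivial case: no boundary, closure Ω = Ω, take f = id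
    have hcl : closure Ω ⊆ Ω := by
      intro x hx
      by_cases hxo : x ∈ Ω
      · exact hxo
      · exfalso
        have : x ∈ frontier Ω := ⟨hx, fun h => hxo (interior_subset h)⟩
        rw [hfr] at this
        exact this
    refine ⟨fun x => x, fun x hx => hcl hx, ?_, ?_, ?_⟩
    · intro x _ y _
      nlinarith [norm_nonneg (x - y)]
    · intro x _
      simp [hε]
    · intro τ _ x hx
      have h : (1 - τ) • x + τ • x = x := by module
      rwa [h]
  · -- main case
    have hfrne : (frontier Ω).Nonempty := nonempty_iff_ne_empty.mpr hfr
    have hfr_cpt : IsCompact (frontier Ω) :=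
      Metric.isCompact_of_isClosed_isBounded isClosed_frontier
        (hbdd.closure.subset frontier_subset_closure)
    choose! δf hδ vf hv using hC0
    have hcover : frontier Ω ⊆ ⋃ y ∈ frontier Ω, ball y (δf y / 8) := by
      intro y hy
      exact mem_biUnion hy (mem_ball_self (by have := hδ y hy; linarith))
    obtain ⟨b', hb'sub, hb'fin, hb'cov⟩ :=
      hfr_cpt.elim_finite_subcover_image (fun y _ => isOpen_ball) hcover
    set L : List (EuclideanSpace ℝ (Fin d)) := hb'fin.toFinset.toList with hL
    have hmemL : ∀ p ∈ L, p ∈ frontier Ω := by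
      intro p hp
      have : p ∈ b' := by rwa [hL, Finset.mem_toList, Set.Finite.mem_toFinset] at hp
      exact hb'sub this
    have hcovL : ∀ y ∈ frontier Ω, ∃ p ∈ L, dist y p < δf p / 8 := by
      intro y hy
      obtain ⟨p, hp, hyp⟩ := mem_iUnion₂.mp (hb'cov hy)
      exact ⟨p, by rw [hL, Finset.mem_toList, Set.Finite.mem_toFinset]; exact hp,
        mem_ball.mp hyp⟩
    set δm : ℝ := (L.map δf).foldr min 1 with hδm
    have hδm_pos : 0 < δm := by
      apply foldr_min_pos
      rintro a ha
      obtain ⟨p, hp, rfl⟩ := List.mem_map.mp ha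
      exact hδ p (hmemL p hp)
    have hδm_le : ∀ p ∈ L, δm ≤ δf p := fun p hp =>
      foldr_min_le _ _ (List.mem_map_of_mem (f := δf) hp)
    set N : ℝ := (L.length : ℝ) with hN
    have hN0 : (0:ℝ) ≤ N := Nat.cast_nonneg _
    set t : ℝ := min (ε / (2 * (N + 1)))
      (min (ε * δm / (8 * (N + 1))) (δm / (16 * (N + 1)))) with ht
    have htpos : 0 < t := by
      refine lt_min (by positivity) (lt_min (by positivity) (by positivity))
    have ht1 : t * (N + 1) ≤ ε / 2 := by
      have h := min_le_left (ε / (2 * (N + 1)))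
        (min (ε * δm / (8 * (N + 1))) (δm / (16 * (N + 1))))
      rw [← ht] at h
      have h2 := mul_le_mul_of_nonneg_right h (by linarith : (0:ℝ) ≤ N + 1)
      calc t * (N + 1) ≤ ε / (2 * (N + 1)) * (N + 1) := h2
        _ = ε / 2 := by field_simp
    have ht2 : t * (N + 1) ≤ ε * δm / 8 := by
      have h := (min_le_right (ε / (2 * (N + 1)))
        (min (ε * δm / (8 * (N + 1))) (δm / (16 * (N + 1))))).trans
        (min_le_left (ε * δm / (8 * (N + 1))) (δm / (16 * (N + 1))))
      rw [← ht] at h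
      have h2 := mul_le_mul_of_nonneg_right h (by linarith : (0:ℝ) ≤ N + 1)
      calc t * (N + 1) ≤ ε * δm / (8 * (N + 1)) * (N + 1) := h2
        _ = ε * δm / 8 := by field_simp
    have ht3 : t * (N + 1) ≤ δm / 16 := by
      have h := (min_le_right (ε / (2 * (N + 1)))
        (min (ε * δm / (8 * (N + 1))) (δm / (16 * (N + 1))))).trans
        (min_le_right (ε * δm / (8 * (N + 1))) (δm / (16 * (N + 1))))
      rw [← ht] at h
      have h2 := mul_le_mul_of_nonneg_right h (by linarith : (0:ℝ) ≤ N + 1)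
      calc t * (N + 1) ≤ δm / (16 * (N + 1)) * (N + 1) := h2
        _ = δm / 16 := by field_simp
    have htN : t * N ≤ t * (N + 1) := by nlinarith
    -- bump functions
    set φ : EuclideanSpace ℝ (Fin d) → EuclideanSpace ℝ (Fin d) → ℝ :=
      fun p x => min 1 (max 0 ((δf p / 2 - dist x p) * (4 / δf p))) with hφ
    have hφ0 : ∀ p x, 0 ≤ φ p x := fun p x => le_min zero_le_one (le_max_left _ _)
    have hφle1 : ∀ p x, φ p x ≤ 1 := fun p x => min_le_left _ _
    have hφ1 : ∀ p ∈ L, ∀ x, dist x p ≤ δf p / 4 → φ p x = 1 := by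
      intro p hp x hxp
      have hδp := hδ p (hmemL p hp)
      have h1 : (1:ℝ) ≤ (δf p / 2 - dist x p) * (4 / δf p) := by
        rw [show (1:ℝ) = (δf p / 4) * (4 / δf p) by field_simp]
        apply mul_le_mul_of_nonneg_right (by linarith) (by positivity)
      exact min_eq_left (h1.trans (le_max_right 0 _))
    have hφpos : ∀ p ∈ L, ∀ x, 0 < φ p x → dist x p < δf p / 2 := by
      intro p hp x h
      have hδp := hδ p (hmemL p hp)
      by_contra h'
      push_neg at h'
      have ha : (δf p / 2 - dist x p) * (4 / δf p) ≤ 0 :=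
        mul_nonpos_of_nonpos_of_nonneg (by linarith) (by positivity)
      have hzero : φ p x = 0 := by
        simp only [hφ]
        rw [max_eq_left ha, min_eq_right zero_le_one]
      rw [hzero] at h
      exact lt_irrefl 0 h
    have hφlip : ∀ p ∈ L, ∀ x y, |φ p x - φ p y| ≤ 4 / δm * ‖x - y‖ := by
      intro p hp x y
      have hδp := hδ p (hmemL p hp)
      have h1 := min_lip 1 (max 0 ((δf p / 2 - dist x p) * (4 / δf p)))
        (max 0 ((δf p / 2 - dist y p) * (4 / δf p)))
      have h2 := max_lip 0 ((δf p / 2 - dist x p) * (4 / δf p))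
        ((δf p / 2 - dist y p) * (4 / δf p))
      have h3 : (δf p / 2 - dist x p) * (4 / δf p) - (δf p / 2 - dist y p) * (4 / δf p)
          = (dist y p - dist x p) * (4 / δf p) := by ring
      have h4 : |(dist y p - dist x p) * (4 / δf p)| ≤ dist x y * (4 / δf p) := by
        rw [abs_mul, abs_of_nonneg (by positivity : (0:ℝ) ≤ 4 / δf p)]
        have := abs_dist_sub_le y x p
        apply mul_le_mul_of_nonneg_right _ (by positivity)
        rwa [dist_comm y x] at this
      have h5 : dist x y * (4 / δf p) ≤ 4 / δm * ‖x - y‖ := by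
        rw [dist_eq_norm, mul_comm]
        apply mul_le_mul_of_nonneg_right _ (norm_nonneg _)
        apply div_le_div_of_nonneg_left (by norm_num) hδm_pos (hδm_le p hp)
      calc |φ p x - φ p y| ≤ |max 0 ((δf p / 2 - dist x p) * (4 / δf p)) -
            max 0 ((δf p / 2 - dist y p) * (4 / δf p))| := h1
        _ ≤ |(δf p / 2 - dist x p) * (4 / δf p) - (δf p / 2 - dist y p) * (4 / δf p)| := h2
        _ = |(dist y p - dist x p) * (4 / δf p)| := by rw [h3]
        _ ≤ dist x y * (4 / δf p) := h4
        _ ≤ 4 / δm * ‖x - y‖ := h5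
    set V : EuclideanSpace ℝ (Fin d) → EuclideanSpace ℝ (Fin d) :=
      fun x => (L.map fun p => φ p x • vf p).sum with hV
    have hVnorm : ∀ x, ‖V x‖ ≤ N := by
      intro x
      have h := list_norm_sum_le L (fun p => φ p x • vf p) 1 (fun p hp => by
        rw [norm_smul, (hv p (hmemL p hp)).1, mul_one, Real.norm_eq_abs,
          abs_of_nonneg (hφ0 p x)]
        exact hφle1 p x)
      simpa using h
    -- key penetration property
    have key : ∀ x ∈ closure Ω, ∀ s : ℝ, 0 < s → s ≤ t → x + s • V x ∈ Ω := by
      intro x hx s hs0 hst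
      have hsN : s * N ≤ δm / 16 := by
        calc s * N ≤ t * N := mul_le_mul_of_nonneg_right hst hN0
          _ ≤ t * (N + 1) := htN
          _ ≤ δm / 16 := ht3
      by_cases hB : ∃ p ∈ L, dist x p < δf p / 4
      · obtain ⟨p₀, hp₀, hxp₀⟩ := hB
        have hpoly := poly δf vf (fun p => φ p x) hs0 L x hx
          (fun q _ => hφ0 q x)
          (fun q hq hcq => by
            refine ⟨hφle1 q x, hv q (hmemL q hq), ?_⟩
            have hd := hφpos q hq x hcq
            have hδq := hδ q (hmemL q hq)
            have hq16 := hδm_le q hq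
            rw [← hN]
            linarith)
        have hres := hpoly.2 (Or.inr ⟨p₀, hp₀, by
          show (0:ℝ) < φ p₀ x
          rw [hφ1 p₀ hp₀ x hxp₀.le]; norm_num⟩)
        exact hres
      · push_neg at hB
        have hfar : ∀ y ∈ frontier Ω, δm / 8 ≤ dist x y := by
          intro y hy
          obtain ⟨p, hp, hyp⟩ := hcovL y hy
          have h1 := hB p hp
          have h2 := dist_triangle x y p
          have h3 := hδm_le p hp
          linarith
        have hxΩ : x ∈ Ω := by
          by_contra hxo
          have hxf : x ∈ frontier Ω := ⟨hx, fun h => hxo (interior_subset h)⟩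
          have := hfar x hxf
          rw [dist_self] at this
          linarith
        have hball : ball x (δm / 8) ⊆ Ω := by
          by_contra hsub
          rw [Set.not_subset] at hsub
          obtain ⟨z, hz1, hz2⟩ := hsub
          have hcne : (Ωᶜ : Set (EuclideanSpace ℝ (Fin d))).Nonempty := ⟨z, hz2⟩
          obtain ⟨y, hyc, hyd⟩ := hΩ.isClosed_compl.exists_infDist_eq_dist hcne x
          have hρz : infDist x Ωᶜ ≤ dist x z := infDist_le_dist_of_mem hz2
          have hρpos : 0 < dist x y := dist_pos.mpr (fun h => hyc (h ▸ hxΩ))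
          set ρ : ℝ := dist x y with hρ
          have hycl : y ∈ closure Ω := by
            rw [Metric.mem_closure_iff]
            intro ε' hε'
            set m : ℝ := min ρ ε' with hm
            have hmpos : 0 < m := lt_min hρpos hε'
            have hmρ : m ≤ ρ := min_le_left _ _
            set θ : ℝ := 1 - m / (2 * ρ) with hθ
            have hfrac : 0 < m / (2 * ρ) := by positivity
            have hfrac2 : m / (2 * ρ) ≤ 1 / 2 := by
              rw [div_le_div_iff₀ (by positivity) (by norm_num)]
              nlinarith
            have hθ1 : θ < 1 := by rw [hθ]; linarith
            have hθ0 : 0 ≤ θ := by rw [hθ]; linarith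
            refine ⟨x + θ • (y - x), ?_, ?_⟩
            · by_contra hw
              have hw' : x + θ • (y - x) ∈ (Ωᶜ : Set (EuclideanSpace ℝ (Fin d))) := hw
              have hle : infDist x Ωᶜ ≤ dist x (x + θ • (y - x)) := infDist_le_dist_of_mem hw'
              have hdxw : dist x (x + θ • (y - x)) = θ * ρ := by
                rw [dist_eq_norm]
                have he : x - (x + θ • (y - x)) = (-θ) • (y - x) := by module
                rw [he, norm_smul, Real.norm_eq_abs, abs_neg, abs_of_nonneg hθ0]
                congr 1
                rw [← dist_eq_norm, dist_comm]
              rw [hdxw, hyd] at hle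
              nlinarith
            · have hdyw : dist y (x + θ • (y - x)) = (1 - θ) * ρ := by
                rw [dist_eq_norm]
                have he : y - (x + θ • (y - x)) = (1 - θ) • (y - x) := by module
                rw [he, norm_smul, Real.norm_eq_abs, abs_of_nonneg (by linarith)]
                congr 1
                rw [← dist_eq_norm, dist_comm]
              rw [hdyw]
              have h6 : (1 - θ) * ρ = m / 2 := by
                rw [hθ]
                field_simp
                ring
              have h7 : m ≤ ε' := min_le_right _ _
              rw [h6]
              linarith
          have hyfr : y ∈ frontier Ω := ⟨hycl, fun h => hyc (interior_subset h)⟩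
          have h8 := hfar y hyfr
          have hzb : dist z x < δm / 8 := mem_ball.mp hz1
          rw [dist_comm z x] at hzb
          linarith [hρz, h8, hzb, hyd, hρ]
        apply hball
        rw [mem_ball, dist_eq_norm]
        have he : x + s • V x - x = s • V x := by abel
        rw [he, norm_smul, Real.norm_eq_abs, abs_of_pos hs0]
        have h9 : s * ‖V x‖ ≤ s * N := mul_le_mul_of_nonneg_left (hVnorm x) hs0.le
        linarith
    -- assemble
    refine ⟨fun x => x + t • V x, fun x hx => key x hx t htpos le_rfl, ?_, ?_, ?_⟩
    · -- Lipschitz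
      intro x hx y hy
      have hdiff : (x + t • V x) - (y + t • V y) = (x - y) + t • (V x - V y) := by module
      have hVd : ‖V x - V y‖ ≤ N * (4 / δm * ‖x - y‖) := by
        have hsub := list_sum_sub L (fun p => φ p x • vf p) (fun p => φ p y • vf p)
        have heq : V x - V y = (L.map fun p => φ p x • vf p - φ p y • vf p).sum := hsub
        rw [heq]
        apply list_norm_sum_le
        intro p hp
        show ‖φ p x • vf p - φ p y • vf p‖ ≤ _
        rw [← sub_smul, norm_smul, (hv p (hmemL p hp)).1, mul_one, Real.norm_eq_abs]
        exact hφlip p hp x y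
      have hLip : t * N * (4 / δm) ≤ ε := by
        have h1 : t * N ≤ ε * δm / 8 := htN.trans ht2
        have h2 : t * N * (4 / δm) ≤ (ε * δm / 8) * (4 / δm) :=
          mul_le_mul_of_nonneg_right h1 (by positivity)
        have h3 : (ε * δm / 8) * (4 / δm) = ε / 2 := by field_simp; ring
        linarith
      calc ‖(x + t • V x) - (y + t • V y)‖ = ‖(x - y) + t • (V x - V y)‖ := by rw [hdiff]
        _ ≤ ‖x - y‖ + ‖t • (V x - V y)‖ := norm_add_le _ _
        _ = ‖x - y‖ + t * ‖V x - V y‖ := by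
            rw [norm_smul, Real.norm_eq_abs, abs_of_pos htpos]
        _ ≤ ‖x - y‖ + t * (N * (4 / δm * ‖x - y‖)) := by
            have := mul_le_mul_of_nonneg_left hVd htpos.le
            linarith
        _ ≤ (1 + ε) * ‖x - y‖ := by
            have h10 := mul_le_mul_of_nonneg_right hLip (norm_nonneg (x - y))
            nlinarith [norm_nonneg (x - y)]
    · -- close to identity
      intro x _
      have he : (x + t • V x) - x = t • V x := by abel
      rw [he, norm_smul, Real.norm_eq_abs, abs_of_pos htpos]
      have h1 : t * ‖V x‖ ≤ t * N := mul_le_mul_of_nonneg_left (hVnorm x) htpos.le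
      linarith
    · -- homotopy
      intro τ hτ x hx
      obtain ⟨hτ0, hτ1⟩ := hτ
      have hform : (1 - τ) • x + τ • (x + t • V x) = x + (τ * t) • V x := by module
      rw [hform]
      rcases hτ0.lt_or_eq with hτpos | hτ0'
      · refine subset_closure (key x hx (τ * t) (mul_pos hτpos htpos) ?_)
        nlinarith
      · rw [← hτ0', zero_mul, zero_smul, add_zero]
        exact hx
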